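/- Let a = (a_1,…,a_m) and b = (b_1,…,b_t) be compositions of n with a_1 > 2b_1 (Pure Contraction); note b_1 < n, so t ≥ 2. Set a' = (a_1 − 2b_1, b_1, a_2,…,a_m) and b' = (b_2,…,b_t), which are compositions of n − b_1. Then M(a|b) and M(a'|b') have the same number of cycle components and the same number of path components; in particular ind(a,b) = ind(a',b'). -/

import Mathlib

open scoped Classical

/-- Vertices `j` and `k` of `{1,…,n}` (encoded as `Fin n`, vertex `v` is `v+1`) are joined by
an edge determined by the composition `a`. -/
def CompEdge {n : ℕ} (a : Composition n) (j k : Fin n) : Prop :=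
  j ≠ k ∧ ∃ i : Fin a.length,
    a.sizeUpTo i < (j : ℕ) + 1 ∧ (j : ℕ) + 1 ≤ a.sizeUpTo (i + 1) ∧
    a.sizeUpTo i < (k : ℕ) + 1 ∧ (k : ℕ) + 1 ≤ a.sizeUpTo (i + 1) ∧
    ((j : ℕ) + 1) + ((k : ℕ) + 1) = 2 * a.sizeUpTo i + a.blocksFun i + 1

lemma CompEdge.symm {n : ℕ} {a : Composition n} {j k : Fin n} (h : CompEdge a j k) :
    CompEdge a k j := by
  obtain ⟨hne, i, h1, h2, h3, h4, h5⟩ := h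
  exact ⟨hne.symm, i, h3, h4, h1, h2, by omega⟩

/-- The meander `M(a|b)` of the pair of compositions `(a, b)` of `n`. -/
def Meander {n : ℕ} (a b : Composition n) : SimpleGraph (Fin n) where
  Adj j k := CompEdge a j k ∨ CompEdge b j k
  symm := by
    constructor
    intro j k h
    rcases h with h | h
    · exact Or.inl h.symm
    · exact Or.inr h.symm
  loopless := by
    constructor
    intro j h
    rcases h with ⟨hne, _⟩ | ⟨hne, _⟩ <;> exact hne rfl

/-- A connected component of the meander is a cycle if each of its vertices is incident
to both a top edge and a bottom edge. -/
def IsCycleComp {n : ℕ} (a b : Composition n) (c : (Meander a b).ConnectedComponent) : Prop :=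
  ∀ v : Fin n, (Meander a b).connectedComponentMk v = c →
    (∃ w, CompEdge a v w) ∧ (∃ w, CompEdge b v w)

/-- The number of cycle components of the meander `M(a|b)`. -/
noncomputable def cycleCount {n : ℕ} (a b : Composition n) : ℕ :=
  Nat.card {c : (Meander a b).ConnectedComponent // IsCycleComp a b c}

/-- The number of path components of the meander `M(a|b)`. -/
noncomputable def pathCount {n : ℕ} (a b : Composition n) : ℕ :=
  Nat.card {c : (Meander a b).ConnectedComponent // ¬ IsCycleComp a b c}

/-- The index `ind(a,b) = 2C + P - 1` of a pair of compositions of `n`. -/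
noncomputable def seaweedInd {n : ℕ} (a b : Composition n) : ℕ :=
  2 * cycleCount a b + pathCount a b - 1

/-- `C(n,k)`: the number of ordered pairs of compositions of `n` of index `k`. -/
noncomputable def Cnk (n k : ℕ) : ℕ :=
  Nat.card {p : Composition n × Composition n // seaweedInd p.1 p.2 = k}

/-- Arc relation for a block list `L` placed at offset `off`, on 1-indexed positions. -/
def ArcE (L : List ℕ) (off x y : ℕ) : Prop :=
  x ≠ y ∧ ∃ i, ∃ h : i < L.length,
    off + (L.take i).sum < x ∧ x ≤ off + (L.take i).sum + L.get ⟨i, h⟩ ∧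
    off + (L.take i).sum < y ∧ y ≤ off + (L.take i).sum + L.get ⟨i, h⟩ ∧
    x + y = 2 * (off + (L.take i).sum) + L.get ⟨i, h⟩ + 1

lemma compEdge_iff_arcE {n : ℕ} (a : Composition n) (j k : Fin n) :
    CompEdge a j k ↔ ArcE a.blocks 0 ((j : ℕ) + 1) ((k : ℕ) + 1) := by
  constructor
  · rintro ⟨hne, i, h1, h2, h3, h4, h5⟩
    refine ⟨fun h => hne (Fin.ext (by omega)), i, i.isLt, ?_, ?_, ?_, ?_, ?_⟩ <;>
    · have hs := a.sizeUpTo_succ i.isLt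
      have e1 : a.blocksFun i = a.blocks.get ⟨(i : ℕ), i.isLt⟩ := rfl
      have e2 : a.blocks[(i:ℕ)] = a.blocks.get ⟨(i : ℕ), i.isLt⟩ := rfl
      simp only [Composition.sizeUpTo] at *
      omega
  · rintro ⟨hne, i, hi, h1, h2, h3, h4, h5⟩
    refine ⟨fun h => hne (by rw [h]), ⟨i, hi⟩, ?_, ?_, ?_, ?_, ?_⟩ <;>
    · have hs := a.sizeUpTo_succ hi
      have e1 : a.blocksFun ⟨i, hi⟩ = a.blocks.get ⟨i, hi⟩ := rfl
      have e2 : a.blocks[i] = a.blocks.get ⟨i, hi⟩ := rfl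
      simp only [Composition.sizeUpTo] at *
      omega
lemma arcE_cons {c : ℕ} {L : List ℕ} {off x y : ℕ} :
    ArcE (c :: L) off x y ↔
      (x ≠ y ∧ off < x ∧ x ≤ off + c ∧ off < y ∧ y ≤ off + c ∧ x + y = 2 * off + c + 1) ∨
      ArcE L (off + c) x y := by
  constructor
  · rintro ⟨hne, i, hi, h1, h2, h3, h4, h5⟩
    cases i with
    | zero =>
      left
      simp only [List.take_zero, List.sum_nil] at *
      rw [show (c :: L).get ⟨0, hi⟩ = c from rfl] at *
      exact ⟨hne, by omega, by omega, by omega, by omega, by omega⟩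
    | succ i =>
      right
      refine ⟨hne, i, by simpa using hi, ?_⟩
      simp only [List.take_succ_cons, List.sum_cons, List.get_cons_succ] at *
      omega
  · rintro (⟨hne, h1, h2, h3, h4, h5⟩ | ⟨hne, i, hi, h1, h2, h3, h4, h5⟩)
    · exact ⟨hne, 0, by simp, by simpa using h1, by simpa using h2, by simpa using h3,
        by simpa using h4, by simp; omega⟩
    · refine ⟨hne, i + 1, by simpa using hi, ?_⟩
      simp only [List.take_succ_cons, List.sum_cons, List.get_cons_succ] at *
      omega

lemma arcE_add {L : List ℕ} {off x y d : ℕ} :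
    ArcE L (off + d) (x + d) (y + d) ↔ ArcE L off x y := by
  constructor
  · rintro ⟨hne, i, hi, h1, h2, h3, h4, h5⟩
    exact ⟨fun h => hne (by omega), i, hi, by omega, by omega, by omega, by omega, by omega⟩
  · rintro ⟨hne, i, hi, h1, h2, h3, h4, h5⟩
    exact ⟨fun h => hne (by omega), i, hi, by omega, by omega, by omega, by omega, by omega⟩

lemma ArcE.symm' {L : List ℕ} {off x y : ℕ} (h : ArcE L off x y) : ArcE L off y x := by
  obtain ⟨hne, i, hi, h1, h2, h3, h4, h5⟩ := h
  exact ⟨hne.symm, i, hi, h3, h4, h1, h2, by omega⟩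

lemma ArcE.bounds {L : List ℕ} {off x y : ℕ} (h : ArcE L off x y) :
    off < x ∧ x ≤ off + L.sum ∧ off < y ∧ y ≤ off + L.sum := by
  obtain ⟨hne, i, hi, h1, h2, h3, h4, h5⟩ := h
  have key : (L.take i).sum + L.get ⟨i, hi⟩ ≤ L.sum := by
    have e1 : (L.take (i+1)).sum = (L.take i).sum + L.get ⟨i, hi⟩ := by
      rw [List.sum_take_succ _ _ hi]; rfl
    have e2 : (L.take (i+1)).sum + (L.drop (i+1)).sum = L.sum := by
      rw [← List.sum_append, List.take_append_drop]
    omega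
  omega
def HasArc (L : List ℕ) (off x : ℕ) : Prop := ∃ y, ArcE L off x y

lemma hasArc_cons {c : ℕ} {L : List ℕ} {off x : ℕ} :
    HasArc (c :: L) off x ↔
      (off < x ∧ x ≤ off + c ∧ 2 * x ≠ 2 * off + c + 1) ∨ HasArc L (off + c) x := by
  constructor
  · rintro ⟨y, hy⟩
    rcases arcE_cons.mp hy with ⟨hne, h1, h2, h3, h4, h5⟩ | h
    · left; omega
    · right; exact ⟨y, h⟩
  · rintro (⟨h1, h2, h3⟩ | ⟨y, hy⟩)
    · exact ⟨2 * off + c + 1 - x, arcE_cons.mpr (Or.inl ⟨by omega, h1, h2, by omega, by omega, by omega⟩)⟩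
    · exact ⟨y, arcE_cons.mpr (Or.inr hy)⟩

lemma hasArc_add {L : List ℕ} {off x d : ℕ} :
    HasArc L (off + d) (x + d) ↔ HasArc L off x := by
  constructor
  · rintro ⟨y, hy⟩
    have hb := hy.bounds
    refine ⟨y - d, ?_⟩
    have : y = (y - d) + d := by omega
    rw [this] at hy
    exact arcE_add.mp hy
  · rintro ⟨y, hy⟩
    exact ⟨y + d, arcE_add.mpr hy⟩

lemma hasArc_nil {off x : ℕ} : ¬ HasArc [] off x := by
  rintro ⟨y, -, i, hi, -⟩
  simp at hi

lemma compEdge_exists_iff {n : ℕ} (a : Composition n) (v : Fin n) :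
    (∃ w, CompEdge a v w) ↔ HasArc a.blocks 0 ((v : ℕ) + 1) := by
  constructor
  · rintro ⟨w, hw⟩
    exact ⟨(w : ℕ) + 1, (compEdge_iff_arcE a v w).mp hw⟩
  · rintro ⟨y, hy⟩
    have hb := hy.bounds
    have hn : a.blocks.sum = n := a.blocks_sum
    refine ⟨⟨y - 1, by omega⟩, (compEdge_iff_arcE a v _).mpr ?_⟩
    have : (y - 1) + 1 = y := by omega
    rw [this]
    exact hy

lemma ArcE.shift {L : List ℕ} {off x y : ℕ} (h : ArcE L off x y) (off' x' y' d : ℕ)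
    (h1 : off' = off + d) (h2 : x' = x + d) (h3 : y' = y + d) : ArcE L off' x' y' := by
  subst h1 h2 h3; exact arcE_add.mpr h

lemma ArcE.unshift {L : List ℕ} {off x y : ℕ} (h : ArcE L off x y) (off' x' y' d : ℕ)
    (h1 : off = off' + d) (h2 : x = x' + d) (h3 : y = y' + d) : ArcE L off' x' y' := by
  subst h1 h2 h3; exact arcE_add.mp h

lemma HasArc.shift {L : List ℕ} {off x : ℕ} (h : HasArc L off x) (off' x' d : ℕ)
    (h1 : off' = off + d) (h2 : x' = x + d) : HasArc L off' x' := by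
  subst h1 h2; exact (hasArc_add).mpr h

lemma HasArc.unshift {L : List ℕ} {off x : ℕ} (h : HasArc L off x) (off' x' d : ℕ)
    (h1 : off = off' + d) (h2 : x = x' + d) : HasArc L off' x' := by
  subst h1 h2; exact (hasArc_add).mp h

lemma HasArc.pos {L : List ℕ} {off x : ℕ} (h : HasArc L off x) :
    off < x ∧ x ≤ off + L.sum := by
  obtain ⟨y, hy⟩ := h
  have := hy.bounds
  exact ⟨this.1, this.2.1⟩
lemma reach_lift {V W : Type*} {G : SimpleGraph V} {H : SimpleGraph W} (g : V → W)
    (h : ∀ u v, G.Adj u v → H.Reachable (g u) (g v)) {u v : V} (huv : G.Reachable u v) :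
    H.Reachable (g u) (g v) := by
  obtain ⟨p⟩ := huv
  induction p with
  | nil => exact SimpleGraph.Reachable.refl _
  | cons ha p ih => exact (h _ _ ha).trans ih

noncomputable def compMap {V W : Type*} {G : SimpleGraph V} {H : SimpleGraph W} (g : V → W)
    (h : ∀ u v, G.Adj u v → H.Reachable (g u) (g v)) :
    G.ConnectedComponent → H.ConnectedComponent :=
  SimpleGraph.ConnectedComponent.lift (fun v => H.connectedComponentMk (g v))
    (fun _ _ p _ => SimpleGraph.ConnectedComponent.sound (reach_lift g h ⟨p⟩))

@[simp] lemma compMap_mk {V W : Type*} {G : SimpleGraph V} {H : SimpleGraph W} (g : V → W)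
    (h : ∀ u v, G.Adj u v → H.Reachable (g u) (g v)) (v : V) :
    compMap g h (G.connectedComponentMk v) = H.connectedComponentMk (g v) := rfl
theorem pure_contraction (n : ℕ) (a b : Composition n) (a₁ b₁ : ℕ) (as bs : List ℕ)
    (ha : a.blocks = a₁ :: as) (hb : b.blocks = b₁ :: bs)
    (h₁ : 2 * b₁ < a₁)
    (a' b' : Composition (n - b₁))
    (ha' : a'.blocks = (a₁ - 2 * b₁) :: b₁ :: as) (hb' : b'.blocks = bs) :
    cycleCount a b = cycleCount a' b' ∧ pathCount a b = pathCount a' b' ∧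
      seaweedInd a b = seaweedInd a' b' := by
  -- numeric facts
  have hna : a₁ + as.sum = n := by
    have := a.blocks_sum; rw [ha, List.sum_cons] at this; exact this
  have hnb : b₁ + bs.sum = n := by
    have := b.blocks_sum; rw [hb, List.sum_cons] at this; exact this
  have hb₁ : 0 < b₁ := b.blocks_pos (by rw [hb]; exact List.mem_cons_self)
  have han : a₁ ≤ n := by omega
  -- edge characterizations
  have hA : ∀ u v : Fin n, CompEdge a u v ↔ ArcE (a₁ :: as) 0 (↑u + 1) (↑v + 1) :=
    fun u v => by rw [compEdge_iff_arcE, ha]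
  have hB : ∀ u v : Fin n, CompEdge b u v ↔ ArcE (b₁ :: bs) 0 (↑u + 1) (↑v + 1) :=
    fun u v => by rw [compEdge_iff_arcE, hb]
  have hA' : ∀ u v : Fin (n - b₁),
      CompEdge a' u v ↔ ArcE ((a₁ - 2 * b₁) :: b₁ :: as) 0 (↑u + 1) (↑v + 1) :=
    fun u v => by rw [compEdge_iff_arcE, ha']
  have hB' : ∀ u v : Fin (n - b₁), CompEdge b' u v ↔ ArcE bs 0 (↑u + 1) (↑v + 1) :=
    fun u v => by rw [compEdge_iff_arcE, hb']
  have hEA : ∀ v : Fin n, (∃ w, CompEdge a v w) ↔ HasArc (a₁ :: as) 0 (↑v + 1) :=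
    fun v => by rw [compEdge_exists_iff, ha]
  have hEB : ∀ v : Fin n, (∃ w, CompEdge b v w) ↔ HasArc (b₁ :: bs) 0 (↑v + 1) :=
    fun v => by rw [compEdge_exists_iff, hb]
  have hEA' : ∀ v : Fin (n - b₁),
      (∃ w, CompEdge a' v w) ↔ HasArc ((a₁ - 2 * b₁) :: b₁ :: as) 0 (↑v + 1) :=
    fun v => by rw [compEdge_exists_iff, ha']
  have hEB' : ∀ v : Fin (n - b₁), (∃ w, CompEdge b' v w) ↔ HasArc bs 0 (↑v + 1) :=
    fun v => by rw [compEdge_exists_iff, hb']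
  -- the vertex maps
  set f : Fin (n - b₁) → Fin n := fun v => ⟨(v : ℕ) + b₁, by have := v.isLt; omega⟩ with hf
  set g : Fin n → Fin (n - b₁) := fun w =>
    if h : b₁ ≤ (w : ℕ) then ⟨(w : ℕ) - b₁, by have := w.isLt; omega⟩
    else ⟨a₁ - 1 - (w : ℕ) - b₁, by have := w.isLt; omega⟩ with hg
  have hfval : ∀ v : Fin (n - b₁), ((f v : Fin n) : ℕ) = ↑v + b₁ := fun v => rfl
  have hgval₁ : ∀ w : Fin n, b₁ ≤ ↑w → ((g w : Fin (n - b₁)) : ℕ) = ↑w - b₁ := by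
    intro w h; simp only [hg, dif_pos h]
  have hgval₂ : ∀ w : Fin n, ↑w < b₁ → ((g w : Fin (n - b₁)) : ℕ) = a₁ - 1 - ↑w - b₁ := by
    intro w h; simp only [hg, dif_neg (by omega : ¬ b₁ ≤ (w : ℕ))]
  -- old adjacency builders
  have oldTop1 : ∀ u v : Fin n, (↑u : ℕ) + 1 ≤ a₁ → (↑v : ℕ) + 1 ≤ a₁ →
      ((↑u : ℕ) + 1) + (↑v + 1) = a₁ + 1 → (↑u : ℕ) ≠ ↑v → (Meander a b).Adj u v := by
    intro u v h1 h2 h3 h4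
    exact Or.inl ((hA u v).mpr (arcE_cons.mpr (Or.inl
      ⟨by omega, by omega, by omega, by omega, by omega, by omega⟩)))
  have oldBot1 : ∀ u v : Fin n, (↑u : ℕ) + 1 ≤ b₁ → (↑v : ℕ) + 1 ≤ b₁ →
      ((↑u : ℕ) + 1) + (↑v + 1) = b₁ + 1 → (↑u : ℕ) ≠ ↑v → (Meander a b).Adj u v := by
    intro u v h1 h2 h3 h4
    exact Or.inr ((hB u v).mpr (arcE_cons.mpr (Or.inl
      ⟨by omega, by omega, by omega, by omega, by omega, by omega⟩)))
  -- forward: new edges give old reachability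
  have hfwd : ∀ u v : Fin (n - b₁), (Meander a' b').Adj u v →
      (Meander a b).Reachable (f u) (f v) := by
    intro u v huv
    have hu := u.isLt; have hv := v.isLt
    rcases huv with ht | hbt
    · -- top edge of new graph
      rw [hA'] at ht
      rcases arcE_cons.mp ht with ⟨e0, e1, e2, e3, e4, e5⟩ | ht2
      · -- first block: maps to old top edge in middle region
        refine SimpleGraph.Adj.reachable (oldTop1 (f u) (f v) ?_ ?_ ?_ ?_) <;>
          simp only [hfval] <;> omega
      · rcases arcE_cons.mp ht2 with ⟨e0, e1, e2, e3, e4, e5⟩ | ht3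
        · -- second block: path of length 3 in old graph
          -- positions in old graph
          set X : ℕ := (↑u : ℕ) + 1 + b₁ with hX
          set Y : ℕ := (↑v : ℕ) + 1 + b₁ with hY
          -- X, Y ∈ (a₁ - b₁, a₁], X + Y = 2a₁ - b₁ + 1, X ≠ Y
          have hw₁ : a₁ + 1 - X - 1 < n := by omega
          have hw₂ : X - (a₁ - b₁) - 1 < n := by omega
          set w₁ : Fin n := ⟨a₁ + 1 - X - 1, hw₁⟩
          set w₂ : Fin n := ⟨X - (a₁ - b₁) - 1, hw₂⟩
          have r1 : (Meander a b).Adj (f u) w₁ := by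
            apply oldTop1 <;> simp only [hfval, w₁, w₂] <;> omega
          have r2 : (Meander a b).Adj w₁ w₂ := by
            apply oldBot1 <;> simp only [w₁, w₂] <;> omega
          have r3 : (Meander a b).Adj w₂ (f v) := by
            apply oldTop1 <;> simp only [hfval, w₁, w₂] <;> omega
          exact (r1.reachable.trans r2.reachable).trans r3.reachable
        · -- as blocks, shifted
          apply SimpleGraph.Adj.reachable
          refine Or.inl ((hA (f u) (f v)).mpr (arcE_cons.mpr (Or.inr ?_)))
          exact ht3.shift _ _ _ b₁ (by omega) (by simp only [hfval]; omega)
            (by simp only [hfval]; omega)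
    · -- bottom edge of new graph
      rw [hB'] at hbt
      apply SimpleGraph.Adj.reachable
      refine Or.inr ((hB (f u) (f v)).mpr (arcE_cons.mpr (Or.inr ?_)))
      exact hbt.shift _ _ _ b₁ (by omega) (by simp only [hfval]; omega)
        (by simp only [hfval]; omega)
  -- backward: old edges give new reachability
  have hbwd : ∀ u v : Fin n, (Meander a b).Adj u v →
      (Meander a' b').Reachable (g u) (g v) := by
    intro u v huv
    have hu := u.isLt; have hv := v.isLt
    rcases huv with ht | hbt
    · -- old top edge
      rw [hA] at ht
      rcases arcE_cons.mp ht with ⟨e0, e1, e2, e3, e4, e5⟩ | ht2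
      · -- first block of a
        by_cases hx : (↑u : ℕ) + 1 ≤ b₁
        · -- u is removed; g u = g v
          have hy : b₁ ≤ (↑v : ℕ) := by omega
          have : g u = g v := by
            apply Fin.ext
            rw [hgval₂ u (by omega), hgval₁ v hy]
            omega
          rw [this]
        · by_cases hy : (↑v : ℕ) + 1 ≤ b₁
          · have : g u = g v := by
              apply Fin.ext
              rw [hgval₁ u (by omega), hgval₂ v (by omega)]
              omega
            rw [this]
          · -- both in middle region: new first-block top edge
            have hgu := hgval₁ u (by omega)
            have hgv := hgval₁ v (by omega)
            refine SimpleGraph.Adj.reachable (Or.inl ((hA' (g u) (g v)).mpr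
              (arcE_cons.mpr (Or.inl ⟨?_, ?_, ?_, ?_, ?_, ?_⟩)))) <;> omega
      · -- as blocks
        have hbd := ht2.bounds
        have hgu := hgval₁ u (by omega)
        have hgv := hgval₁ v (by omega)
        refine SimpleGraph.Adj.reachable (Or.inl ((hA' (g u) (g v)).mpr
          (arcE_cons.mpr (Or.inr (arcE_cons.mpr (Or.inr ?_))))))
        exact ht2.unshift _ _ _ b₁ (by omega) (by omega) (by omega)
    · -- old bottom edge
      rw [hB] at hbt
      rcases arcE_cons.mp hbt with ⟨e0, e1, e2, e3, e4, e5⟩ | hbt2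
      · -- first block of b: both removed; new second-block top edge
        have hgu := hgval₂ u (by omega)
        have hgv := hgval₂ v (by omega)
        refine SimpleGraph.Adj.reachable (Or.inl ((hA' (g u) (g v)).mpr
          (arcE_cons.mpr (Or.inr (arcE_cons.mpr (Or.inl
            ⟨?_, ?_, ?_, ?_, ?_, ?_⟩)))))) <;> omega
      · -- bs blocks
        have hbd := hbt2.bounds
        have hgu := hgval₁ u (by omega)
        have hgv := hgval₁ v (by omega)
        refine SimpleGraph.Adj.reachable (Or.inr ((hB' (g u) (g v)).mpr ?_))
        exact hbt2.unshift _ _ _ b₁ (by omega) (by omega) (by omega)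
  have hgf : ∀ v : Fin (n - b₁), g (f v) = v := by
    intro v
    apply Fin.ext
    rw [hgval₁ (f v) (by rw [hfval]; omega), hfval]
    omega
  have hfg : ∀ w : Fin n, (Meander a b).Reachable (f (g w)) w := by
    intro w
    have hw := w.isLt
    by_cases h : b₁ ≤ (w : ℕ)
    · have : f (g w) = w := by
        apply Fin.ext
        rw [hfval, hgval₁ w h]
        omega
      rw [this]
    · have hv := hgval₂ w (by omega)
      have hfv := hfval (g w)
      refine SimpleGraph.Adj.reachable (oldTop1 (f (g w)) w ?_ ?_ ?_ ?_) <;> omega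
  -- component machinery
  have hfwdR : ∀ {u v : Fin (n - b₁)}, (Meander a' b').Reachable u v →
      (Meander a b).Reachable (f u) (f v) := fun h => reach_lift f hfwd h
  have hbwdR : ∀ {u v : Fin n}, (Meander a b).Reachable u v →
      (Meander a' b').Reachable (g u) (g v) := fun h => reach_lift g hbwd h
  -- degree lemmas
  have degB : ∀ v : Fin (n - b₁), (∃ w, CompEdge b' v w) ↔ (∃ w, CompEdge b (f v) w) := by
    intro v
    have hfv := hfval v
    have hvlt := v.isLt
    rw [hEB', hEB, hasArc_cons]
    constructor
    · intro h
      exact Or.inr (h.shift _ _ b₁ (by omega) (by omega))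
    · rintro (⟨h1, h2, h3⟩ | h)
      · omega
      · exact h.unshift _ _ b₁ (by omega) (by omega)
  have T1 : ∀ v : Fin (n - b₁), (↑v : ℕ) + 1 ≤ a₁ - 2 * b₁ →
      ((∃ w, CompEdge a' v w) ↔ (∃ w, CompEdge a (f v) w)) := by
    intro v hx
    have hfv := hfval v
    rw [hEA', hEA, hasArc_cons, hasArc_cons, hasArc_cons]
    constructor
    · rintro (⟨h1, h2, h3⟩ | (⟨h1, h2, h3⟩ | h))
      · exact Or.inl ⟨by omega, by omega, by omega⟩
      · omega
      · have := h.pos; omega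
    · rintro (⟨h1, h2, h3⟩ | h)
      · exact Or.inl ⟨by omega, by omega, by omega⟩
      · have := h.pos; omega
  have T2 : ∀ v : Fin (n - b₁), a₁ - 2 * b₁ < (↑v : ℕ) + 1 → (↑v : ℕ) + 1 ≤ a₁ - b₁ →
      ((∃ w, CompEdge a (f v) w) ∧
        ((∃ w, CompEdge a' v w) ↔ 2 * ((↑v : ℕ) + 1) ≠ 2 * (a₁ - 2 * b₁) + b₁ + 1)) := by
    intro v hx1 hx2
    have hfv := hfval v
    rw [hEA', hEA, hasArc_cons, hasArc_cons, hasArc_cons]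
    constructor
    · exact Or.inl ⟨by omega, by omega, by omega⟩
    · constructor
      · rintro (⟨h1, h2, h3⟩ | (⟨h1, h2, h3⟩ | h))
        · omega
        · omega
        · have := h.pos; omega
      · intro h
        exact Or.inr (Or.inl ⟨by omega, by omega, by omega⟩)
  have T3 : ∀ v : Fin (n - b₁), a₁ - b₁ < (↑v : ℕ) + 1 →
      ((∃ w, CompEdge a' v w) ↔ (∃ w, CompEdge a (f v) w)) := by
    intro v hx
    have hfv := hfval v
    rw [hEA', hEA, hasArc_cons, hasArc_cons, hasArc_cons]
    constructor
    · rintro (⟨h1, h2, h3⟩ | (⟨h1, h2, h3⟩ | h))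
      · omega
      · omega
      · exact Or.inr (h.shift _ _ b₁ (by omega) (by omega))
    · rintro (⟨h1, h2, h3⟩ | h)
      · omega
      · exact Or.inr (Or.inr (h.unshift _ _ b₁ (by omega) (by omega)))
  have R1 : ∀ w : Fin n, (↑w : ℕ) + 1 ≤ b₁ → ∃ w', CompEdge a w w' := by
    intro w hw
    rw [hEA, hasArc_cons]
    exact Or.inl ⟨by omega, by omega, by omega⟩
  have R2 : ∀ w : Fin n, (↑w : ℕ) + 1 ≤ b₁ →
      ((∃ w', CompEdge b w w') ↔ 2 * ((↑w : ℕ) + 1) ≠ b₁ + 1) := by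
    intro w hw
    rw [hEB, hasArc_cons]
    constructor
    · rintro (⟨h1, h2, h3⟩ | h)
      · omega
      · have := h.pos; omega
    · intro h
      exact Or.inl ⟨by omega, by omega, by omega⟩
  -- the key transfer of cycle-ness
  have hkey : ∀ v : Fin (n - b₁),
      (IsCycleComp a' b' ((Meander a' b').connectedComponentMk v) ↔
        IsCycleComp a b ((Meander a b).connectedComponentMk (f v))) := by
    intro v
    constructor
    · intro hcyc w hw
      have hr : (Meander a b).Reachable w (f v) :=
        SimpleGraph.ConnectedComponent.exact hw
      have hwlt := w.isLt
      by_cases hwb : b₁ ≤ (↑w : ℕ)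
      · have hfgw : f (g w) = w := by
          apply Fin.ext
          rw [hfval, hgval₁ w hwb]
          omega
        have hrg : (Meander a' b').Reachable (g w) v := by
          have := hbwdR hr
          rwa [hgf] at this
        obtain ⟨htop', hbot'⟩ :=
          hcyc (g w) (SimpleGraph.ConnectedComponent.sound hrg)
        have hgwv := hgval₁ w hwb
        constructor
        · by_cases h1 : (↑(g w) : ℕ) + 1 ≤ a₁ - 2 * b₁
          · have := (T1 (g w) h1).mp htop'
            rwa [hfgw] at this
          · by_cases h2 : (↑(g w) : ℕ) + 1 ≤ a₁ - b₁
            · have := (T2 (g w) (by omega) h2).1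
              rwa [hfgw] at this
            · have := (T3 (g w) (by omega)).mp htop'
              rwa [hfgw] at this
        · have := (degB (g w)).mp hbot'
          rwa [hfgw] at this
      · have hx : (↑w : ℕ) + 1 ≤ b₁ := by omega
        refine ⟨R1 w hx, ?_⟩
        rw [R2 w hx]
        intro heq
        set u : Fin n := ⟨a₁ - 1 - ↑w, by omega⟩ with hu
        have huval : (↑u : ℕ) = a₁ - 1 - ↑w := rfl
        have hadj : (Meander a b).Adj w u :=
          oldTop1 w u (by omega) (by omega) (by omega) (by omega)
        have hru : (Meander a' b').Reachable (g u) v := by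
          have := hbwdR ((hadj.symm.reachable).trans hr)
          rwa [hgf] at this
        obtain ⟨htop', _⟩ :=
          hcyc (g u) (SimpleGraph.ConnectedComponent.sound hru)
        have hguv := hgval₁ u (by omega)
        have := ((T2 (g u) (by omega) (by omega)).2).mp htop'
        exact this (by omega)
    · intro hcyc u hu
      have hru : (Meander a' b').Reachable u v :=
        SimpleGraph.ConnectedComponent.exact hu
      have hrfu : (Meander a b).Reachable (f u) (f v) := hfwdR hru
      have hult := u.isLt
      have hfu := hfval u
      obtain ⟨htop, hbot⟩ :=
        hcyc (f u) (SimpleGraph.ConnectedComponent.sound hrfu)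
      refine ⟨?_, (degB u).mpr hbot⟩
      by_cases h1 : (↑u : ℕ) + 1 ≤ a₁ - 2 * b₁
      · exact (T1 u h1).mpr htop
      · by_cases h2 : (↑u : ℕ) + 1 ≤ a₁ - b₁
        · rw [(T2 u (by omega) h2).2]
          intro heq
          set j : Fin n := ⟨a₁ - 1 - (↑u + b₁), by omega⟩ with hj
          have hjval : (↑j : ℕ) = a₁ - 1 - (↑u + b₁) := rfl
          have hadj : (Meander a b).Adj (f u) j :=
            oldTop1 (f u) j (by omega) (by omega) (by omega) (by omega)
          have hjb : (↑j : ℕ) + 1 ≤ b₁ := by omega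
          obtain ⟨-, hbotj⟩ := hcyc j (SimpleGraph.ConnectedComponent.sound
            ((hadj.symm.reachable).trans hrfu))
          exact ((R2 j hjb).mp hbotj) (by omega)
        · exact (T3 u (by omega)).mpr htop
  -- component bijection
  let Φ : (Meander a' b').ConnectedComponent → (Meander a b).ConnectedComponent :=
    compMap f hfwd
  let Ψ : (Meander a b).ConnectedComponent → (Meander a' b').ConnectedComponent :=
    compMap g hbwd
  have hΦΨ : ∀ c, Ψ (Φ c) = c := by
    intro c
    induction c using SimpleGraph.ConnectedComponent.ind with
    | _ v =>
      show (Meander a' b').connectedComponentMk (g (f v)) = _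
      rw [hgf]
  have hΨΦ : ∀ c, Φ (Ψ c) = c := by
    intro c
    induction c using SimpleGraph.ConnectedComponent.ind with
    | _ w => exact SimpleGraph.ConnectedComponent.sound (hfg w)
  have hkeyC : ∀ c, IsCycleComp a' b' c ↔ IsCycleComp a b (Φ c) := by
    intro c
    induction c using SimpleGraph.ConnectedComponent.ind with
    | _ v => exact hkey v
  let e : (Meander a' b').ConnectedComponent ≃ (Meander a b).ConnectedComponent :=
    ⟨Φ, Ψ, hΦΨ, hΨΦ⟩
  have ec : {c : (Meander a' b').ConnectedComponent // IsCycleComp a' b' c} ≃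
      {c : (Meander a b).ConnectedComponent // IsCycleComp a b c} :=
    Equiv.subtypeEquiv e (fun c => by exact hkeyC c)
  have ep : {c : (Meander a' b').ConnectedComponent // ¬ IsCycleComp a' b' c} ≃
      {c : (Meander a b).ConnectedComponent // ¬ IsCycleComp a b c} :=
    Equiv.subtypeEquiv e (fun c => by exact not_congr (hkeyC c))
  have hc : cycleCount a b = cycleCount a' b' := (Nat.card_congr ec).symm
  have hp : pathCount a b = pathCount a' b' := (Nat.card_congr ep).symm
  exact ⟨hc, hp, by unfold seaweedInd; rw [hc, hp]⟩
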